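/- Let G be a graph and u, v two distinct vertices of G. In the blow-up ⊗^n G, the set T_u ∪ T_v (where T_w = {(j,w) : j ∈ ℤ_n}) is a twin set if and only if u and v are non-adjacent twins in G. -/

import Mathlib

/-- The blow-up of `n` copies of `G`. -/
def SimpleGraph.blowup {V : Type*} (n : ℕ) (G : SimpleGraph V) : SimpleGraph (ZMod n × V) :=
  G.comap Prod.snd

/-- A twin set: a set of vertices that are pairwise twins. -/
def SimpleGraph.IsTwinSet {V : Type*} (G : SimpleGraph V) (S : Set V) : Prop :=
  ∀ x ∈ S, ∀ y ∈ S, G.neighborSet x \ {y} = G.neighborSet y \ {x}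

/-- `T_u ∪ T_v` is a twin set in the blow-up `⊗ⁿ G` iff `u` and `v` are non-adjacent
twins in `G`. -/
theorem blowup_twinSet_iff {V : Type*} (n : ℕ) (hn : 2 ≤ n) (G : SimpleGraph V)
    (u v : V) (huv : u ≠ v) :
    (G.blowup n).IsTwinSet ({p : ZMod n × V | p.2 = u} ∪ {p : ZMod n × V | p.2 = v}) ↔
      (¬ G.Adj u v ∧ G.neighborSet u \ {v} = G.neighborSet v \ {u}) := by
  have h01 : (0 : ZMod n) ≠ 1 := by
    haveI : Fact (1 < n) := ⟨hn⟩
    exact zero_ne_one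
  have hmemN : ∀ (p q : ZMod n × V),
      q ∈ (G.blowup n).neighborSet p ↔ G.Adj p.2 q.2 := fun p q => Iff.rfl
  constructor
  · intro h
    have key := h ((0 : ZMod n), u) (Or.inl rfl) ((1 : ZMod n), v) (Or.inr rfl)
    have hna : ¬ G.Adj u v := by
      intro hA
      have hmem : ((0 : ZMod n), v) ∈
          (G.blowup n).neighborSet ((0 : ZMod n), u) \ {((1 : ZMod n), v)} := by
        refine ⟨hA, ?_⟩
        simp [h01]
      rw [key] at hmem
      exact G.loopless.irrefl v hmem.1
    refine ⟨hna, ?_⟩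
    ext w
    simp only [Set.mem_diff, SimpleGraph.mem_neighborSet, Set.mem_singleton_iff]
    constructor
    · rintro ⟨hw, hwv⟩
      have hmem : ((0 : ZMod n), w) ∈
          (G.blowup n).neighborSet ((0 : ZMod n), u) \ {((1 : ZMod n), v)} :=
        ⟨hw, by simp [hwv]⟩
      rw [key] at hmem
      exact ⟨hmem.1, fun hwu => hmem.2 (by rw [hwu]; rfl)⟩
    · rintro ⟨hw, hwu⟩
      have hmem : ((1 : ZMod n), w) ∈
          (G.blowup n).neighborSet ((1 : ZMod n), v) \ {((0 : ZMod n), u)} :=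
        ⟨hw, by simp [h01.symm]⟩
      rw [← key] at hmem
      exact ⟨hmem.1, fun hwv => hmem.2 (by rw [hwv]; rfl)⟩
  · rintro ⟨hna, htw⟩
    have huv' : ∀ w, G.Adj u w ↔ G.Adj v w := by
      intro w
      by_cases h1 : w = u
      · subst h1
        exact iff_of_false (G.irrefl) (fun h => hna h.symm)
      by_cases h2 : w = v
      · subst h2
        exact iff_of_false hna (G.irrefl)
      · have := Set.ext_iff.mp htw w
        simpa [h1, h2] using this
    have hall : ∀ a b : V, (a = u ∨ a = v) → (b = u ∨ b = v) →
        ∀ w, G.Adj a w ↔ G.Adj b w := by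
      rintro a b (rfl | rfl) (rfl | rfl) w
      · exact Iff.rfl
      · exact huv' w
      · exact (huv' w).symm
      · exact Iff.rfl
    intro x hx y hy
    ext q
    simp only [Set.mem_diff, hmemN, Set.mem_singleton_iff]
    have hx' : x.2 = u ∨ x.2 = v := hx
    have hy' : y.2 = u ∨ y.2 = v := hy
    have hiff : ∀ w, G.Adj x.2 w ↔ G.Adj y.2 w := hall x.2 y.2 hx' hy'
    constructor
    · rintro ⟨hA, hq⟩
      refine ⟨(hiff q.2).mp hA, fun hqx => ?_⟩
      subst hqx
      exact G.irrefl hA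
    · rintro ⟨hA, hq⟩
      refine ⟨(hiff q.2).mpr hA, fun hqy => ?_⟩
      subst hqy
      exact G.irrefl hA
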